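/- Let k ≥ 2 and let G_k be the graph with vertex set [k] × [k] (where [k] = {0,…,k−1}), with edges of the grid P_k □ P_k, together with the edges joining (0,j) to (k−1, k−j−1) for all j ∈ [k] and the edges joining (j,0) to (k−j−1, k−1) for all j ∈ [k]. Then the set D = {(i,i) : i ∈ [k]} is an odd cycle transversal of G_k, i.e., G_k − D is bipartite. -/

import Mathlib

/-- One-directional edge relation of the projective grid graph `G_k`. -/
def gkRel (k : ℕ) (u v : Fin k × Fin k) : Prop :=
  (u.1 = v.1 ∧ (u.2 : ℕ) + 1 = (v.2 : ℕ)) ∨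
  (u.2 = v.2 ∧ (u.1 : ℕ) + 1 = (v.1 : ℕ)) ∨
  ((u.1 : ℕ) = 0 ∧ (v.1 : ℕ) = k - 1 ∧ (u.2 : ℕ) + (v.2 : ℕ) = k - 1) ∨
  ((u.2 : ℕ) = 0 ∧ (v.2 : ℕ) = k - 1 ∧ (u.1 : ℕ) + (v.1 : ℕ) = k - 1)

/-- The projective quadrangulation `G_k`: the grid `P_k □ P_k` with added edges
`(0,j)–(k−1,k−j−1)` and `(j,0)–(k−j−1,k−1)`. -/
def Gk (k : ℕ) : SimpleGraph (Fin k × Fin k) where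
  Adj u v := u ≠ v ∧ (gkRel k u v ∨ gkRel k v u)
  symm := by
    constructor
    intro u v h
    exact ⟨h.1.symm, h.2.symm⟩
  loopless := by
    constructor
    intro u h
    exact h.1 rfl

instance (k : ℕ) : DecidableRel (Gk k).Adj := by
  intro u v
  unfold Gk gkRel
  infer_instance

/-- The coloring value. -/
def gkCol (v : ℕ × ℕ) : ℕ :=
  (v.1 + v.2 + (if v.1 < v.2 then 0 else 1)) % 2

lemma gkCol_ne (k : ℕ) (hk : 2 ≤ k) (u v : Fin k × Fin k)
    (hu : (u.1 : ℕ) ≠ (u.2 : ℕ)) (hv : (v.1 : ℕ) ≠ (v.2 : ℕ))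
    (h : gkRel k u v) :
    gkCol ((u.1 : ℕ), (u.2 : ℕ)) ≠ gkCol ((v.1 : ℕ), (v.2 : ℕ)) := by
  have hu1 := u.1.isLt
  have hu2 := u.2.isLt
  have hv1 := v.1.isLt
  have hv2 := v.2.isLt
  unfold gkCol
  rcases h with ⟨h1, h2⟩ | ⟨h1, h2⟩ | ⟨h1, h2, h3⟩ | ⟨h1, h2, h3⟩
  · have h1' : (u.1 : ℕ) = (v.1 : ℕ) := congrArg Fin.val h1
    simp only []
    split_ifs <;> omega
  · have h1' : (u.2 : ℕ) = (v.2 : ℕ) := congrArg Fin.val h1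
    simp only []
    split_ifs <;> omega
  · simp only []
    split_ifs <;> omega
  · simp only []
    split_ifs <;> omega

theorem stmt_8 (k : ℕ) (hk : 2 ≤ k) :
    ((Gk k).induce {v : Fin k × Fin k | v.1 ≠ v.2}).Colorable 2 := by
  refine ⟨SimpleGraph.Coloring.mk
    (fun v => ⟨gkCol ((v.1.1 : ℕ), (v.1.2 : ℕ)), Nat.mod_lt _ (by norm_num)⟩) ?_⟩
  rintro ⟨u, hu⟩ ⟨v, hv⟩ ⟨hne, hadj⟩
  have hu' : (u.1 : ℕ) ≠ (u.2 : ℕ) := fun h => hu (Fin.val_injective h)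
  have hv' : (v.1 : ℕ) ≠ (v.2 : ℕ) := fun h => hv (Fin.val_injective h)
  simp only [ne_eq, Fin.mk.injEq]
  rcases hadj with h | h
  · exact fun e => gkCol_ne k hk u v hu' hv' h (congrArg Fin.val e)
  · exact fun e => (gkCol_ne k hk v u hv' hu' h).symm (congrArg Fin.val e)
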